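/- arXiv:2003.14331 — 2 statements merged into one kernel-verified Lean document; each statement's English description precedes it below -/
import Mathlib

section
/- Let d ≥ 1 and let F⁰ : ℝ^d → ℝ be a bounded 1-periodic function with mean zero, having an absolutely convergent Fourier series with F̂⁰(k) ≥ 0 for all k ∈ ℤ^d, k ≠ 0. Then for any m ≥ 1 and any points x^1, …, x^m ∈ [0,1)^d one has sup_{y ∈ ℝ^d} |(1/m) ∑_{μ=1}^m F⁰(x^μ − y)| ≤ ‖F⁰‖_∞^{1/2} · m^{−1} · (∑_{j=1}^m ∑_{n=1}^m F⁰(x^n − x^j))^{1/2}. -/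
open MeasureTheory

/-- The unit cube `[0,1)^d` in `ℝ^d`. -/
noncomputable def unitCube (d : ℕ) : Set (Fin d → ℝ) :=
  Set.univ.pi fun _ => Set.Ico (0 : ℝ) 1

/-- The `k`-th Fourier coefficient `ĝ(k) = ∫_{[0,1)^d} g(x) e^{-2πi⟨k,x⟩} dx`. -/
noncomputable def fourierCoef (d : ℕ) (g : (Fin d → ℝ) → ℂ) (k : Fin d → ℤ) : ℂ :=
  ∫ x in unitCube d, g x *
    Complex.exp (-(2 * Real.pi * Complex.I) * ((∑ i, (k i : ℝ) * x i : ℝ) : ℂ))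

noncomputable def Ee (d : ℕ) (k : Fin d → ℤ) (z : Fin d → ℝ) : ℂ :=
  Complex.exp (2 * Real.pi * Complex.I * ((∑ i, (k i : ℝ) * z i : ℝ) : ℂ))

lemma Ee_sub (d : ℕ) (k : Fin d → ℤ) (u v : Fin d → ℝ) :
    Ee d k (u - v) = Ee d k u * Ee d k (-v) := by
  rw [Ee, Ee, Ee, ← Complex.exp_add]
  congr 1
  have : ∑ i, (k i : ℝ) * (u - v) i = (∑ i, (k i : ℝ) * u i) + ∑ i, (k i : ℝ) * (-v) i := by
    rw [← Finset.sum_add_distrib]; congr 1; ext i; simp [sub_eq_add_neg, mul_add]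
  rw [this]; push_cast; ring

lemma norm_Ee (d : ℕ) (k : Fin d → ℤ) (z : Fin d → ℝ) : ‖Ee d k z‖ = 1 := by
  rw [Ee, Complex.norm_exp]
  have : (2 * (Real.pi:ℂ) * Complex.I * ((∑ i, (k i : ℝ) * z i : ℝ) : ℂ)).re = 0 := by
    simp [Complex.mul_re, Complex.mul_im]
  rw [this, Real.exp_zero]

lemma Ee_zero (d : ℕ) (k : Fin d → ℤ) : Ee d k 0 = 1 := by
  simp [Ee]

lemma conj_Ee (d : ℕ) (k : Fin d → ℤ) (z : Fin d → ℝ) :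
    (starRingEnd ℂ) (Ee d k z) = Ee d k (-z) := by
  rw [Ee, Ee, ← Complex.exp_conj]
  congr 1
  have : ∑ i, (k i : ℝ) * (-z) i = -∑ i, (k i : ℝ) * z i := by
    rw [← Finset.sum_neg_distrib]; congr 1; ext i; simp
  rw [this]
  simp [Complex.ext_iff, Complex.mul_re, Complex.mul_im]

lemma fourierCoef_zero (d : ℕ) (g : (Fin d → ℝ) → ℂ) :
    fourierCoef d g 0 = ∫ x in unitCube d, g x := by
  unfold fourierCoef; simp


/-- The chain of inequalities (Cauchy–Schwarz plus the key identity) of the proof of the main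
theorem: `sup_y |(1/m) ∑_μ F⁰(x^μ - y)| ≤ ‖F⁰‖_∞^{1/2} m^{-1} (∑_{j,n} F⁰(x^n - x^j))^{1/2}`. -/
theorem statement5 (d : ℕ) (hd : 1 ≤ d) (F0 : (Fin d → ℝ) → ℝ)
    (hbdd : ∃ C : ℝ, ∀ x, |F0 x| ≤ C)
    (hper : ∀ (x : Fin d → ℝ) (k : Fin d → ℤ), F0 (x + fun i => (k i : ℝ)) = F0 x)
    (hmean : (∫ x in unitCube d, F0 x) = 0)
    (hsum : Summable fun k : Fin d → ℤ => ‖fourierCoef d (fun x => (F0 x : ℂ)) k‖)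
    (hrep : ∀ x : Fin d → ℝ,
      (F0 x : ℂ) = ∑' k : Fin d → ℤ, fourierCoef d (fun x => (F0 x : ℂ)) k *
        Complex.exp (2 * Real.pi * Complex.I * ((∑ i, (k i : ℝ) * x i : ℝ) : ℂ)))
    (hpos : ∀ k : Fin d → ℤ, k ≠ 0 →
      (fourierCoef d (fun x => (F0 x : ℂ)) k).im = 0 ∧
        0 ≤ (fourierCoef d (fun x => (F0 x : ℂ)) k).re)
    (m : ℕ) (hm : 1 ≤ m) (x : Fin m → Fin d → ℝ) (hx : ∀ j, x j ∈ unitCube d) :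
    ∀ y : Fin d → ℝ,
      |(m : ℝ)⁻¹ * ∑ μ : Fin m, F0 (x μ - y)| ≤
        Real.sqrt (⨆ z, |F0 z|) * (m : ℝ)⁻¹ *
          Real.sqrt (∑ j : Fin m, ∑ n : Fin m, F0 (x n - x j)) := by
  intro y
  set c : (Fin d → ℤ) → ℂ := fourierCoef d (fun x => (F0 x : ℂ)) with hcdef
  set a : (Fin d → ℤ) → ℝ := fun k => ‖c k‖ with hadef
  have ha0 : ∀ k, 0 ≤ a k := fun k => norm_nonneg _
  have sa : Summable a := hsum
  have hrep' : ∀ z : Fin d → ℝ, (F0 z : ℂ) = ∑' k, c k * Ee d k z := fun z => hrep z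
  -- c 0 = 0
  have hc0 : c 0 = 0 := by
    rw [hcdef, fourierCoef_zero]
    have h : (∫ z in unitCube d, (F0 z : ℂ)) = ((∫ z in unitCube d, F0 z : ℝ) : ℂ) :=
      Complex.ofRealLI.integral_comp_comm F0
    rw [h, hmean, Complex.ofReal_zero]
  -- c k is ofReal (a k)
  have hca : ∀ k, c k = ((a k : ℝ) : ℂ) := by
    intro k
    by_cases hk : k = 0
    · subst hk
      rw [hc0]
      have : a 0 = 0 := by rw [hadef]; simp only [hc0, norm_zero]
      rw [this, Complex.ofReal_zero]
    · obtain ⟨him, hre⟩ := hpos k hk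
      have h1 : c k = ((c k).re : ℂ) := by
        refine Complex.ext ?_ ?_
        · rw [Complex.ofReal_re]
        · rw [Complex.ofReal_im, him]
      have h2 : a k = (c k).re := by
        simp only [hadef]
        conv_lhs => rw [h1]
        rw [Complex.norm_real, Real.norm_eq_abs, abs_of_nonneg hre]
      rw [h1, h2]
  -- Q
  set Q : (Fin d → ℤ) → ℂ := fun k => ∑ μ : Fin m, Ee d k (x μ) with hQdef
  have hQm : ∀ k, ‖Q k‖ ≤ (m : ℝ) := by
    intro k
    calc ‖Q k‖ ≤ ∑ μ : Fin m, ‖Ee d k (x μ)‖ := norm_sum_le _ _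
      _ = ∑ μ : Fin m, (1 : ℝ) := Finset.sum_congr rfl fun μ _ => norm_Ee d k (x μ)
      _ = (m : ℝ) := by simp
  have hconjQ : ∀ k, (starRingEnd ℂ) (Q k) = ∑ μ : Fin m, Ee d k (-(x μ)) := by
    intro k
    rw [hQdef, map_sum]
    exact Finset.sum_congr rfl fun μ _ => conj_Ee d k (x μ)
  -- summabilities
  have saq : Summable (fun k => a k * ‖Q k‖) := by
    refine Summable.of_nonneg_of_le (fun k => by positivity)
      (fun k => mul_le_mul_of_nonneg_left (hQm k) (ha0 k)) (sa.mul_right (m : ℝ))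
  have saq2 : Summable (fun k => a k * ‖Q k‖ ^ 2) := by
    refine Summable.of_nonneg_of_le (fun k => by positivity)
      (fun k => mul_le_mul_of_nonneg_left ?_ (ha0 k)) (sa.mul_right ((m : ℝ) ^ 2))
    exact pow_le_pow_left₀ (norm_nonneg _) (hQm k) 2
  have hterm_summable : ∀ z : Fin d → ℝ, Summable (fun k => c k * Ee d k z) := by
    intro z
    apply Summable.of_norm
    simp only [norm_mul, norm_Ee, mul_one]
    exact sa
  -- Step A
  have hA : |∑ μ : Fin m, F0 (x μ - y)| ≤ ∑' k, a k * ‖Q k‖ := by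
    have h1 : ((∑ μ : Fin m, F0 (x μ - y) : ℝ) : ℂ)
        = ∑' k, ∑ μ : Fin m, c k * Ee d k (x μ - y) := by
      push_cast
      rw [show (∑ μ : Fin m, (F0 (x μ - y) : ℂ)) = ∑ μ : Fin m, ∑' k, c k * Ee d k (x μ - y)
        from Finset.sum_congr rfl fun μ _ => hrep' _]
      exact (Summable.tsum_finsetSum (fun μ _ => hterm_summable (x μ - y))).symm
    have hsummand : ∀ k, ‖∑ μ : Fin m, c k * Ee d k (x μ - y)‖ = a k * ‖Q k‖ := by
      intro k
      have h2 : ∑ μ : Fin m, c k * Ee d k (x μ - y) = c k * Ee d k (-y) * Q k := by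
        rw [hQdef]
        simp only [Finset.mul_sum]
        refine Finset.sum_congr rfl fun μ _ => ?_
        rw [Ee_sub]; ring
      rw [h2, norm_mul, norm_mul, norm_Ee, mul_one]
    calc |∑ μ : Fin m, F0 (x μ - y)|
        = ‖((∑ μ : Fin m, F0 (x μ - y) : ℝ) : ℂ)‖ := by
          rw [Complex.norm_real, Real.norm_eq_abs]
      _ = ‖∑' k, ∑ μ : Fin m, c k * Ee d k (x μ - y)‖ := by rw [h1]
      _ ≤ ∑' k, ‖∑ μ : Fin m, c k * Ee d k (x μ - y)‖ := by
          apply norm_tsum_le_tsum_norm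
          simpa only [hsummand] using saq
      _ = ∑' k, a k * ‖Q k‖ := by simp only [hsummand]
  -- Step B
  obtain ⟨C, hC⟩ := hbdd
  have hbdda : BddAbove (Set.range fun z => |F0 z|) := ⟨C, by rintro _ ⟨z, rfl⟩; exact hC z⟩
  have hB : ∑' k, a k ≤ ⨆ z, |F0 z| := by
    have h0 : ((∑' k, a k : ℝ) : ℂ) = (F0 0 : ℂ) := by
      rw [Complex.ofReal_tsum, hrep' 0]
      refine tsum_congr fun k => ?_
      rw [Ee_zero, mul_one, hca k]
    have h1 : ∑' k, a k = F0 0 := by exact_mod_cast h0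
    rw [h1]
    exact le_trans (le_abs_self _) (le_ciSup hbdda 0)
  -- Step C
  have hCkey : ∑ j : Fin m, ∑ n : Fin m, F0 (x n - x j) = ∑' k, a k * ‖Q k‖ ^ 2 := by
    have h1 : ((∑ j : Fin m, ∑ n : Fin m, F0 (x n - x j) : ℝ) : ℂ)
        = ((∑' k, a k * ‖Q k‖ ^ 2 : ℝ) : ℂ) := by
      rw [Complex.ofReal_tsum]
      push_cast
      calc (∑ j : Fin m, ∑ n : Fin m, (F0 (x n - x j) : ℂ))
          = ∑ j : Fin m, ∑ n : Fin m, ∑' k, c k * Ee d k (x n - x j) :=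
            Finset.sum_congr rfl fun j _ => Finset.sum_congr rfl fun n _ => hrep' _
        _ = ∑ j : Fin m, ∑' k, ∑ n : Fin m, c k * Ee d k (x n - x j) :=
            Finset.sum_congr rfl fun j _ => (Summable.tsum_finsetSum (fun n _ => hterm_summable _)).symm
        _ = ∑' k, ∑ j : Fin m, ∑ n : Fin m, c k * Ee d k (x n - x j) :=
            (Summable.tsum_finsetSum (fun j _ => summable_sum (fun n _ => hterm_summable _))).symm
        _ = ∑' k, ((a k : ℝ) : ℂ) * ((‖Q k‖ : ℝ) : ℂ) ^ 2 := by
            refine tsum_congr fun k => ?_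
            have e1 : Q k * (starRingEnd ℂ) (Q k)
                = ∑ n : Fin m, ∑ j : Fin m, Ee d k (x n) * Ee d k (-(x j)) := by
              rw [hconjQ k]
              simp only [hQdef]
              rw [Finset.sum_mul_sum]
            have h2 : ∑ j : Fin m, ∑ n : Fin m, c k * Ee d k (x n - x j)
                = c k * (Q k * (starRingEnd ℂ) (Q k)) := by
              calc ∑ j : Fin m, ∑ n : Fin m, c k * Ee d k (x n - x j)
                  = ∑ j : Fin m, ∑ n : Fin m, c k * (Ee d k (x n) * Ee d k (-(x j))) :=
                    Finset.sum_congr rfl fun j _ => Finset.sum_congr rfl fun n _ => by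
                      rw [Ee_sub]
                _ = c k * ∑ j : Fin m, ∑ n : Fin m, Ee d k (x n) * Ee d k (-(x j)) := by
                    simp only [Finset.mul_sum]
                _ = c k * (Q k * (starRingEnd ℂ) (Q k)) := by rw [e1, Finset.sum_comm]
            rw [h2, Complex.mul_conj, hca k, Complex.normSq_eq_norm_sq]
            push_cast
            ring
    exact_mod_cast h1
  -- Step D : Cauchy-Schwarz
  have hD : ∑' k, a k * ‖Q k‖
      ≤ Real.sqrt (∑' k, a k) * Real.sqrt (∑' k, a k * ‖Q k‖ ^ 2) := by
    refine Summable.tsum_le_of_sum_le saq fun s => ?_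
    calc ∑ k ∈ s, a k * ‖Q k‖
        = ∑ k ∈ s, Real.sqrt (a k) * Real.sqrt (a k * ‖Q k‖ ^ 2) := by
          refine Finset.sum_congr rfl fun k _ => ?_
          rw [Real.sqrt_mul (ha0 k), Real.sqrt_sq (norm_nonneg _), ← mul_assoc,
            Real.mul_self_sqrt (ha0 k)]
      _ ≤ Real.sqrt (∑ k ∈ s, a k) * Real.sqrt (∑ k ∈ s, a k * ‖Q k‖ ^ 2) :=
          Real.sum_sqrt_mul_sqrt_le s (fun k => ha0 k) (fun k => by positivity)
      _ ≤ Real.sqrt (∑' k, a k) * Real.sqrt (∑' k, a k * ‖Q k‖ ^ 2) := by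
          refine mul_le_mul ?_ ?_ (Real.sqrt_nonneg _) (Real.sqrt_nonneg _)
          · exact Real.sqrt_le_sqrt (Summable.sum_le_tsum s (fun k _ => ha0 k) sa)
          · exact Real.sqrt_le_sqrt (Summable.sum_le_tsum s (fun k _ => by positivity) saq2)
  -- combine
  have hm0 : (0 : ℝ) < (m : ℝ)⁻¹ := by positivity
  calc |(m : ℝ)⁻¹ * ∑ μ : Fin m, F0 (x μ - y)|
      = (m : ℝ)⁻¹ * |∑ μ : Fin m, F0 (x μ - y)| := by
        rw [abs_mul, abs_of_nonneg hm0.le]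
    _ ≤ (m : ℝ)⁻¹ * (Real.sqrt (∑' k, a k) * Real.sqrt (∑' k, a k * ‖Q k‖ ^ 2)) :=
        mul_le_mul_of_nonneg_left (le_trans hA hD) hm0.le
    _ ≤ (m : ℝ)⁻¹ * (Real.sqrt (⨆ z, |F0 z|) * Real.sqrt (∑' k, a k * ‖Q k‖ ^ 2)) := by
        refine mul_le_mul_of_nonneg_left ?_ hm0.le
        exact mul_le_mul_of_nonneg_right (Real.sqrt_le_sqrt hB) (Real.sqrt_nonneg _)
    _ = Real.sqrt (⨆ z, |F0 z|) * (m : ℝ)⁻¹ *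
          Real.sqrt (∑ j : Fin m, ∑ n : Fin m, F0 (x n - x j)) := by
        rw [hCkey]; ring
end

section
/- Let d ≥ 1 and let F⁰ : ℝ^d → ℝ be an even 1-periodic function with mean zero, having an absolutely convergent Fourier series with F̂⁰(k) ≥ 0 for all k ∈ ℤ^d, k ≠ 0. Suppose the points ξ^1, …, ξ^m ∈ [0,1)^d satisfy ∑_{j=1}^{n−1} F⁰(ξ^n − ξ^j) ≤ 0 for every n = 2, …, m. Then ∑_{k ∈ ℤ^d, k ≠ 0} F̂⁰(k) |Q(ξ, k)|² ≤ F⁰(0) / m, where Q(ξ, k) := (1/m) ∑_{j=1}^m e^{2πi⟨k,ξ^j⟩}. -/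
open MeasureTheory

/-- `Q(ξ, k) = (1/m) ∑_{j=1}^m e^{2πi⟨k, ξ^j⟩}`. -/
noncomputable def Qpt (d m : ℕ) (ξ : Fin m → Fin d → ℝ) (k : Fin d → ℤ) : ℂ :=
  (m : ℂ)⁻¹ * ∑ j, Complex.exp (2 * Real.pi * Complex.I * ((∑ i, (k i : ℝ) * ξ j i : ℝ) : ℂ))

/-- Spectral bound: if the points `ξ^1, …, ξ^m` satisfy the Averaging Search condition for an
even, mean-zero `F⁰` with absolutely convergent Fourier series and `F̂⁰(k) ≥ 0` for `k ≠ 0`,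
then `∑_{k ≠ 0} F̂⁰(k) |Q(ξ,k)|² ≤ F⁰(0)/m`. -/
theorem statement8 (d : ℕ) (hd : 1 ≤ d) (F0 : (Fin d → ℝ) → ℝ)
    (hper : ∀ (x : Fin d → ℝ) (k : Fin d → ℤ), F0 (x + fun i => (k i : ℝ)) = F0 x)
    (heven : ∀ x, F0 (-x) = F0 x)
    (hmean : (∫ x in unitCube d, F0 x) = 0)
    (hsum : Summable fun k : Fin d → ℤ => ‖fourierCoef d (fun x => (F0 x : ℂ)) k‖)
    (hrep : ∀ x : Fin d → ℝ,
      (F0 x : ℂ) = ∑' k : Fin d → ℤ, fourierCoef d (fun x => (F0 x : ℂ)) k *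
        Complex.exp (2 * Real.pi * Complex.I * ((∑ i, (k i : ℝ) * x i : ℝ) : ℂ)))
    (hpos : ∀ k : Fin d → ℤ, k ≠ 0 →
      (fourierCoef d (fun x => (F0 x : ℂ)) k).im = 0 ∧
        0 ≤ (fourierCoef d (fun x => (F0 x : ℂ)) k).re)
    (m : ℕ) (hm : 1 ≤ m) (ξ : Fin m → Fin d → ℝ) (hξ : ∀ j, ξ j ∈ unitCube d)
    (hAS : ∀ n : Fin m, ∑ j ∈ Finset.univ.filter (fun j => j < n), F0 (ξ n - ξ j) ≤ 0) :
    ∑' k : {k : Fin d → ℤ // k ≠ 0},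
        (fourierCoef d (fun x => (F0 x : ℂ)) k.1).re * (‖Qpt d m ξ k.1‖) ^ 2 ≤
      F0 0 / m := by
  classical
  have hm0 : (0 : ℝ) < m := by exact_mod_cast hm
  set c : (Fin d → ℤ) → ℂ := fourierCoef d (fun x => (F0 x : ℂ)) with hcdef
  set e : (Fin d → ℤ) → (Fin d → ℝ) → ℂ :=
    fun k x => Complex.exp (2 * Real.pi * Complex.I * ((∑ i, (k i : ℝ) * x i : ℝ) : ℂ))
    with hedef
  -- the zeroth coefficient vanishes
  have hc0 : c 0 = 0 := by
    have h1 : c 0 = ∫ x in unitCube d, (F0 x : ℂ) := by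
      rw [hcdef, fourierCoef]
      refine setIntegral_congr_fun
        (by rw [unitCube]; exact MeasurableSet.univ_pi fun _ => measurableSet_Ico)
        fun x _ => ?_
      simp
    have h2 : (∫ x in unitCube d, ((F0 x : ℝ) : ℂ)) = ((∫ x in unitCube d, F0 x : ℝ) : ℂ) :=
      integral_ofReal
    rw [h1, h2, hmean]
    simp
  -- norm of exponentials is 1
  have he1 : ∀ (k : Fin d → ℤ) (x : Fin d → ℝ), ‖e k x‖ = 1 := by
    intro k x
    rw [hedef]
    rw [Complex.norm_exp]
    norm_num [Complex.mul_re]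
  -- multiplicativity
  have hsub : ∀ (k : Fin d → ℤ) (x y : Fin d → ℝ),
      e k (x - y) = e k x * (starRingEnd ℂ) (e k y) := by
    intro k x y
    simp only [hedef]
    rw [← Complex.exp_conj, ← Complex.exp_add]
    congr 1
    have h1 : (∑ i, (k i : ℝ) * (x - y) i) = (∑ i, (k i : ℝ) * x i) - ∑ i, (k i : ℝ) * y i := by
      rw [← Finset.sum_sub_distrib]
      exact Finset.sum_congr rfl fun i _ => by simp [Pi.sub_apply, mul_sub]
    rw [h1]
    simp only [map_mul, Complex.conj_I, Complex.conj_ofReal, map_ofNat]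
    push_cast
    ring
  -- summability of each pair series
  have hsummable : ∀ n j : Fin m,
      Summable (fun k => c k * (e k (ξ n) * (starRingEnd ℂ) (e k (ξ j)))) := by
    intro n j
    refine Summable.of_norm_bounded hsum fun k => ?_
    have : ‖c k * (e k (ξ n) * (starRingEnd ℂ) (e k (ξ j)))‖
        = ‖c k‖ * (‖e k (ξ n)‖ * ‖e k (ξ j)‖) := by
      simp [norm_mul]
    rw [this, he1, he1, mul_one, mul_one]
  set E : (Fin d → ℤ) → ℂ := fun k => ∑ j, e k (ξ j) with hEdef
  have hQE : ∀ k, Qpt d m ξ k = (m : ℂ)⁻¹ * E k := by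
    intro k; rfl
  have habsE : ∀ k, ‖E k‖ ≤ m := by
    intro k
    calc ‖E k‖ ≤ ∑ j : Fin m, ‖e k (ξ j)‖ := by
          exact (norm_sum_le _ _)
      _ = m := by simp [he1]
  -- summability of the spectral series
  have hsum2 : Summable (fun k => c k * ((Complex.normSq (E k) : ℝ) : ℂ)) := by
    refine Summable.of_norm_bounded (hsum.mul_right ((m : ℝ) ^ 2)) fun k => ?_
    rw [norm_mul]
    refine mul_le_mul_of_nonneg_left ?_ (norm_nonneg _)
    rw [Complex.norm_real, Real.norm_eq_abs, abs_of_nonneg (Complex.normSq_nonneg _)]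
    rw [Complex.normSq_eq_norm_sq]
    exact pow_le_pow_left₀ (norm_nonneg _) (habsE k) 2
  -- the double sum
  set S : ℝ := ∑ n : Fin m, ∑ j : Fin m, F0 (ξ n - ξ j) with hSdef
  have hdouble : (S : ℂ) = ∑' k, c k * ((Complex.normSq (E k) : ℝ) : ℂ) := by
    rw [hSdef]
    push_cast
    calc (∑ n : Fin m, ∑ j : Fin m, (F0 (ξ n - ξ j) : ℂ))
        = ∑ n : Fin m, ∑ j : Fin m, ∑' k, c k * (e k (ξ n) * (starRingEnd ℂ) (e k (ξ j))) := by
          refine Finset.sum_congr rfl fun n _ => Finset.sum_congr rfl fun j _ => ?_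
          rw [hrep (ξ n - ξ j)]
          exact tsum_congr fun k => by rw [← hsub k (ξ n) (ξ j)]
      _ = ∑' k, ∑ n : Fin m, ∑ j : Fin m, c k * (e k (ξ n) * (starRingEnd ℂ) (e k (ξ j))) := by
          rw [Summable.tsum_finsetSum fun n _ => summable_sum fun j _ => hsummable n j]
          exact Finset.sum_congr rfl fun n _ => (Summable.tsum_finsetSum fun j _ => hsummable n j).symm
      _ = ∑' k, c k * ((Complex.normSq (E k) : ℝ) : ℂ) := by
          refine tsum_congr fun k => ?_
          rw [← Complex.mul_conj]
          have hE : E k = ∑ j, e k (ξ j) := rfl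
          rw [hE, map_sum, Finset.sum_mul_sum, Finset.mul_sum]
          exact Finset.sum_congr rfl fun n _ => by rw [Finset.mul_sum]
  -- take real parts
  have hre : S = ∑' k, (c k).re * Complex.normSq (E k) := by
    have h2 := congrArg Complex.re hdouble
    rw [Complex.ofReal_re, Complex.re_tsum hsum2] at h2
    rw [h2]
    exact tsum_congr fun k => by rw [Complex.mul_re]; simp
  -- rewrite in terms of Q
  set f : (Fin d → ℤ) → ℝ := fun k => (c k).re * (‖Qpt d m ξ k‖) ^ 2 with hfdef
  have hnormSqQ : ∀ k, Complex.normSq (E k) = (m : ℝ) ^ 2 * (‖Qpt d m ξ k‖) ^ 2 := by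
    intro k
    rw [hQE, Complex.normSq_eq_norm_sq, norm_mul, mul_pow, norm_inv, Complex.norm_natCast]
    field_simp
  have hSf : S = (m : ℝ) ^ 2 * ∑' k, f k := by
    rw [hre, ← tsum_mul_left]
    exact tsum_congr fun k => by rw [hfdef, hnormSqQ]; ring
  -- the averaging-search estimate
  have hgsymm : ∀ n j : Fin m, F0 (ξ j - ξ n) = F0 (ξ n - ξ j) := by
    intro n j
    rw [← heven (ξ n - ξ j), neg_sub]
  have hT : S ≤ m * F0 0 := by
    have trich : ∀ n j : Fin m, F0 (ξ n - ξ j) =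
        (if j < n then F0 (ξ n - ξ j) else 0) + (if j = n then F0 (ξ n - ξ j) else 0)
          + (if n < j then F0 (ξ n - ξ j) else 0) := by
      intro n j
      rcases lt_trichotomy j n with h | h | h
      · simp [h, h.ne, not_lt_of_gt h]
      · simp [h, lt_irrefl]
      · simp [h, h.ne', not_lt_of_gt h]
    have hsplit : S = (∑ n : Fin m, ∑ j : Fin m, if j < n then F0 (ξ n - ξ j) else 0)
        + (∑ n : Fin m, ∑ j : Fin m, if j = n then F0 (ξ n - ξ j) else 0)
        + (∑ n : Fin m, ∑ j : Fin m, if n < j then F0 (ξ n - ξ j) else 0) := by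
      rw [hSdef, ← Finset.sum_add_distrib, ← Finset.sum_add_distrib]
      refine Finset.sum_congr rfl fun n _ => ?_
      rw [← Finset.sum_add_distrib, ← Finset.sum_add_distrib]
      exact Finset.sum_congr rfl fun j _ => trich n j
    have hdiag : (∑ n : Fin m, ∑ j : Fin m, if j = n then F0 (ξ n - ξ j) else 0) = m * F0 0 := by
      have : ∀ n : Fin m, (∑ j : Fin m, if j = n then F0 (ξ n - ξ j) else 0) = F0 0 := by
        intro n
        rw [Finset.sum_ite_eq' Finset.univ n (fun j => F0 (ξ n - ξ j))]
        simp
      rw [Finset.sum_congr rfl fun n _ => this n]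
      simp [mul_comm]
    have hTle : (∑ n : Fin m, ∑ j : Fin m, if j < n then F0 (ξ n - ξ j) else 0) ≤ 0 := by
      refine Finset.sum_nonpos fun n _ => ?_
      have := hAS n
      rwa [Finset.sum_filter] at this
    have hgt : (∑ n : Fin m, ∑ j : Fin m, if n < j then F0 (ξ n - ξ j) else 0)
        = (∑ n : Fin m, ∑ j : Fin m, if j < n then F0 (ξ n - ξ j) else 0) := by
      rw [Finset.sum_comm]
      refine Finset.sum_congr rfl fun n _ => Finset.sum_congr rfl fun j _ => ?_
      by_cases h : j < n
      · simp [h, hgsymm]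
      · simp [h]
    rw [hsplit, hgt] at *
    linarith
  -- f is supported away from 0
  have hf0 : f 0 = 0 := by rw [hfdef]; simp [hc0]
  have hsubty : ∑' k : {k : Fin d → ℤ // k ≠ 0}, f k.1 = ∑' k, f k := by
    have : Function.support f ⊆ {k : Fin d → ℤ | k ≠ 0} := by
      intro k hk
      simp only [Set.mem_setOf_eq]
      intro h0
      exact hk (by rw [h0]; exact hf0)
    exact tsum_subtype_eq_of_support_subset this
  -- conclude
  have hgoal : ∑' k : {k : Fin d → ℤ // k ≠ 0}, f k.1 ≤ F0 0 / m := by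
    rw [hsubty]
    have h1 : ∑' k, f k = S / (m : ℝ) ^ 2 := by
      rw [hSf]; field_simp
    rw [h1]
    rw [div_le_div_iff₀ (by positivity) hm0]
    nlinarith [hT]
  exact hgoal
end
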